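/- arXiv:2412.01314 — 2 statements merged into one kernel-verified Lean document; each statement's English description precedes it below -/
import Mathlib

section
/- Let A be a unital C*-algebra and let 0 < ε < 1/3. If u is an ε-unitary in A, then the 2×2 diagonal matrix diag(u, u*) in M₂(A) is connected to the identity I₂ by a norm-continuous path of 3ε-unitaries in M₂(A). -/
open scoped InnerProductSpace

/-- The canonical C*-norm on 2×2 matrices over a unital C*-algebra `A`, given by
the operator norm for the action on the Hilbert A-module A². -/
noncomputable def m2CStarNorm {A : Type*} [CStarAlgebra A]
    (M : Matrix (Fin 2) (Fin 2) A) : ℝ :=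
  sSup ((fun v : Fin 2 → A =>
      Real.sqrt ‖∑ i, star (M.mulVec v i) * M.mulVec v i‖) ''
    {v : Fin 2 → A | ‖∑ i, star (v i) * v i‖ ≤ 1})

section aux
variable {A : Type*} [CStarAlgebra A]
noncomputable local instance : PartialOrder A := CStarAlgebra.spectralOrder A
local instance : StarOrderedRing A := CStarAlgebra.spectralOrderedRing A

private noncomputable def nv (v : Fin 2 → A) : ℝ :=
  ‖(WithCStarModule.equiv A (Fin 2 → A)).symm (star v)‖

private lemma nv_eq (v : Fin 2 → A) : nv v = Real.sqrt ‖∑ i, star (v i) * v i‖ := by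
  rw [nv, WithCStarModule.pi_norm]
  simp [WithCStarModule.equiv_symm_pi_apply, WithCStarModule.inner_def, Fin.sum_univ_two]

private lemma nv_nonneg (v : Fin 2 → A) : 0 ≤ nv v := norm_nonneg _

private lemma nv_add_le (v w : Fin 2 → A) : nv (v + w) ≤ nv v + nv w := by
  rw [nv, nv, nv, star_add, WithCStarModule.equiv_symm_add]; exact norm_add_le _ _

private lemma apply_le_nv (v : Fin 2 → A) (i : Fin 2) : ‖v i‖ ≤ nv v := by
  rw [← norm_star]
  exact WithCStarModule.norm_apply_le_norm ((WithCStarModule.equiv A (Fin 2 → A)).symm (star v)) i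

private lemma nv_le_sum (v : Fin 2 → A) : nv v ≤ ∑ i, ‖v i‖ := by
  simpa [nv] using WithCStarModule.pi_norm_le_sum_norm ((WithCStarModule.equiv A (Fin 2 → A)).symm (star v))

private lemma nv_eq_zero {v : Fin 2 → A} (h : nv v = 0) : v = 0 := by
  rw [nv, norm_eq_zero] at h
  funext i
  have := congrArg (fun x => (WithCStarModule.equiv A (Fin 2 → A)) x i) h
  simpa using this

private lemma nv_smul (r : ℝ) (v : Fin 2 → A) : nv (r • v) = |r| * nv v := by
  rw [nv_eq, nv_eq]
  have : ∀ i, star ((r • v) i) * (r • v) i = (r * r) • (star (v i) * v i) := by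
    intro i
    simp [Pi.smul_apply, star_smul, smul_mul_smul_comm, smul_smul]
  simp_rw [this, ← Finset.smul_sum, norm_smul]
  have hrr : ‖r * r‖ = |r| * |r| := by rw [Real.norm_eq_abs, abs_mul]
  rw [hrr, Real.sqrt_mul (by positivity), Real.sqrt_mul_self (abs_nonneg r)]

private lemma nv_sq (v : Fin 2 → A) : ‖∑ i, star (v i) * v i‖ = nv v ^ 2 := by
  rw [nv_eq, Real.sq_sqrt (norm_nonneg _)]

/-- The unit-"ball" set. -/
private def S (A : Type*) [CStarAlgebra A] : Set (Fin 2 → A) :=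
  {v : Fin 2 → A | ‖∑ i, star (v i) * v i‖ ≤ 1}

private lemma m2_eq (M : Matrix (Fin 2) (Fin 2) A) :
    m2CStarNorm M = sSup ((fun v => nv (M.mulVec v)) '' S A) := by
  rw [m2CStarNorm]
  have hf : (fun v : Fin 2 → A => Real.sqrt ‖∑ i, star (M.mulVec v i) * M.mulVec v i‖)
      = fun v => nv (M.mulVec v) := by
    funext v; rw [nv_eq]
  rw [hf]; rfl

private lemma mem_S_nv_le_one {v : Fin 2 → A} (hv : v ∈ S A) : nv v ≤ 1 := by
  rw [nv_eq]
  exact Real.sqrt_le_one.mpr hv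

private lemma nv_mulVec_le_sum (M : Matrix (Fin 2) (Fin 2) A) {v : Fin 2 → A} (hv : v ∈ S A) :
    nv (M.mulVec v) ≤ ∑ i, ∑ j, ‖M i j‖ := by
  refine (nv_le_sum _).trans ?_
  refine Finset.sum_le_sum fun i _ => ?_
  calc ‖M.mulVec v i‖ = ‖∑ j, M i j * v j‖ := by
        rfl
    _ ≤ ∑ j, ‖M i j * v j‖ := norm_sum_le _ _
    _ ≤ ∑ j, ‖M i j‖ := by
        refine Finset.sum_le_sum fun j _ => ?_
        calc ‖M i j * v j‖ ≤ ‖M i j‖ * ‖v j‖ := norm_mul_le _ _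
          _ ≤ ‖M i j‖ * 1 := by
              refine mul_le_mul_of_nonneg_left ?_ (norm_nonneg _)
              exact (apply_le_nv v j).trans (mem_S_nv_le_one hv)
          _ = ‖M i j‖ := mul_one _

private lemma m2_bddAbove (M : Matrix (Fin 2) (Fin 2) A) :
    BddAbove ((fun v => nv (M.mulVec v)) '' S A) := by
  refine ⟨∑ i, ∑ j, ‖M i j‖, ?_⟩
  rintro r ⟨v, hv, rfl⟩
  exact nv_mulVec_le_sum M hv

private lemma zero_mem_S : (0 : Fin 2 → A) ∈ S A := by simp [S]

private lemma m2_nonneg (M : Matrix (Fin 2) (Fin 2) A) : 0 ≤ m2CStarNorm M := by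
  rw [m2_eq]
  refine le_csSup (m2_bddAbove M) ⟨0, zero_mem_S, ?_⟩
  simp [nv_eq]

private lemma m2_le {M : Matrix (Fin 2) (Fin 2) A} {C : ℝ} (hC : 0 ≤ C)
    (h : ∀ v ∈ S A, nv (M.mulVec v) ≤ C) : m2CStarNorm M ≤ C := by
  rw [m2_eq]
  exact Real.sSup_le (by rintro r ⟨v, hv, rfl⟩; exact h v hv) hC

private lemma nv_mulVec_le (M : Matrix (Fin 2) (Fin 2) A) (v : Fin 2 → A) :
    nv (M.mulVec v) ≤ m2CStarNorm M * nv v := by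
  rcases eq_or_lt_of_le (nv_nonneg v) with h0 | h0
  · have hv0 : v = 0 := nv_eq_zero h0.symm
    subst hv0
    have hz : nv (Matrix.mulVec M (0 : Fin 2 → A)) = 0 := by
      rw [Matrix.mulVec_zero, nv_eq]; simp
    rw [hz]
    exact mul_nonneg (m2_nonneg M) (nv_nonneg 0)
  · set r : ℝ := (nv v)⁻¹ with hr
    have hrpos : 0 < r := inv_pos.mpr h0
    have hsmul : M.mulVec (r • v) = r • M.mulVec v := Matrix.mulVec_smul M r v
    have hmem : r • v ∈ S A := by
      have : nv (r • v) = 1 := by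
        rw [nv_smul, abs_of_pos hrpos, hr, inv_mul_cancel₀ (ne_of_gt h0)]
      rw [S, Set.mem_setOf_eq, nv_sq, this, one_pow]
    have hle : nv (M.mulVec (r • v)) ≤ m2CStarNorm M := by
      rw [m2_eq]
      exact le_csSup (m2_bddAbove M) ⟨r • v, hmem, rfl⟩
    rw [hsmul, nv_smul, abs_of_pos hrpos] at hle
    calc nv (M.mulVec v) = nv v * (r * nv (M.mulVec v)) := by
          rw [hr, ← mul_assoc, mul_inv_cancel₀ h0.ne', one_mul]
    _ ≤ nv v * m2CStarNorm M := by
          exact mul_le_mul_of_nonneg_left hle (le_of_lt h0)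
    _ = m2CStarNorm M * nv v := mul_comm _ _

private lemma m2_mul_le (M N : Matrix (Fin 2) (Fin 2) A) :
    m2CStarNorm (M * N) ≤ m2CStarNorm M * m2CStarNorm N := by
  refine m2_le (mul_nonneg (m2_nonneg M) (m2_nonneg N)) fun v hv => ?_
  rw [← Matrix.mulVec_mulVec]
  calc nv (M.mulVec (N.mulVec v)) ≤ m2CStarNorm M * nv (N.mulVec v) := nv_mulVec_le M _
    _ ≤ m2CStarNorm M * (m2CStarNorm N * nv v) :=
        mul_le_mul_of_nonneg_left (nv_mulVec_le N v) (m2_nonneg M)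
    _ ≤ m2CStarNorm M * (m2CStarNorm N * 1) := by
        refine mul_le_mul_of_nonneg_left ?_ (m2_nonneg M)
        exact mul_le_mul_of_nonneg_left (mem_S_nv_le_one hv) (m2_nonneg N)
    _ = m2CStarNorm M * m2CStarNorm N := by ring

private lemma m2_add_le (M N : Matrix (Fin 2) (Fin 2) A) :
    m2CStarNorm (M + N) ≤ m2CStarNorm M + m2CStarNorm N := by
  refine m2_le (add_nonneg (m2_nonneg M) (m2_nonneg N)) fun v hv => ?_
  rw [Matrix.add_mulVec]
  have h1 := mem_S_nv_le_one hv
  calc nv (M.mulVec v + N.mulVec v) ≤ nv (M.mulVec v) + nv (N.mulVec v) := nv_add_le _ _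
    _ ≤ m2CStarNorm M * nv v + m2CStarNorm N * nv v :=
        add_le_add (nv_mulVec_le M v) (nv_mulVec_le N v)
    _ ≤ m2CStarNorm M * 1 + m2CStarNorm N * 1 := by
        exact add_le_add (mul_le_mul_of_nonneg_left h1 (m2_nonneg M))
          (mul_le_mul_of_nonneg_left h1 (m2_nonneg N))
    _ = m2CStarNorm M + m2CStarNorm N := by ring

private lemma m2_rot_le (c s : ℝ) (hcs : c ^ 2 + s ^ 2 = 1) :
    m2CStarNorm (!![c • 1, -(s • 1); s • 1, c • 1] : Matrix (Fin 2) (Fin 2) A) ≤ 1 := by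
  refine m2_le zero_le_one fun v hv => ?_
  have h0 : (Matrix.mulVec !![c • 1, -(s • 1); s • 1, c • 1] v) 0 = c • v 0 - s • v 1 := by
    simp [Matrix.mulVec, dotProduct, Fin.sum_univ_two, smul_mul_assoc, sub_eq_add_neg]
  have h1 : (Matrix.mulVec !![c • 1, -(s • 1); s • 1, c • 1] v) 1 = s • v 0 + c • v 1 := by
    simp [Matrix.mulVec, dotProduct, Fin.sum_univ_two, smul_mul_assoc]
  have key : ∑ i, star (Matrix.mulVec !![c • 1, -(s • 1); s • 1, c • 1] v i) *
      Matrix.mulVec !![c • 1, -(s • 1); s • 1, c • 1] v i = ∑ i, star (v i) * v i := by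
    rw [Fin.sum_univ_two, Fin.sum_univ_two, h0, h1]
    have hsm : ∀ x y : A, ∀ r q : ℝ, (r • x) * (q • y) = (r * q) • (x * y) := by
      intro x y r q; rw [smul_mul_smul_comm]
    simp only [star_sub, star_add, star_smul, star_trivial, sub_mul, mul_sub, add_mul,
      mul_add, hsm]
    match_scalars <;> nlinarith [hcs]
  rw [nv_eq, key, ← nv_eq]
  exact mem_S_nv_le_one hv

private lemma conj_norm_le {x w : A} (hw : ‖w‖ ≤ 1) : ‖star w * x * w‖ ≤ ‖x‖ := by
  calc ‖star w * x * w‖ ≤ ‖star w * x‖ * ‖w‖ := norm_mul_le _ _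
    _ ≤ ‖star w‖ * ‖x‖ * ‖w‖ := by
        exact mul_le_mul_of_nonneg_right (norm_mul_le _ _) (norm_nonneg _)
    _ ≤ 1 * ‖x‖ * 1 := by
        rw [norm_star]
        exact mul_le_mul (mul_le_mul_of_nonneg_right hw (norm_nonneg _)) hw (norm_nonneg _)
          (by positivity)
    _ = ‖x‖ := by ring

private lemma m2_diag_left_le (a : A) :
    m2CStarNorm (!![a, 0; 0, 1] : Matrix (Fin 2) (Fin 2) A)
      ≤ Real.sqrt (1 + ‖star a * a - 1‖) := by
  refine m2_le (Real.sqrt_nonneg _) fun v hv => ?_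
  have h0 : (Matrix.mulVec !![a, 0; 0, (1 : A)] v) 0 = a * v 0 := by
    simp [Matrix.mulVec, dotProduct, Fin.sum_univ_two]
  have h1 : (Matrix.mulVec !![a, 0; 0, (1 : A)] v) 1 = v 1 := by
    simp [Matrix.mulVec, dotProduct, Fin.sum_univ_two]
  have key : ∑ i, star (Matrix.mulVec !![a, 0; 0, (1:A)] v i) *
      Matrix.mulVec !![a, 0; 0, (1:A)] v i
      = (∑ i, star (v i) * v i) + star (v 0) * (star a * a - 1) * v 0 := by
    rw [Fin.sum_univ_two, Fin.sum_univ_two, h0, h1]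
    simp only [star_mul, mul_sub, sub_mul, mul_one, one_mul]
    noncomm_ring
  rw [nv_eq, key]
  have hb : ‖(∑ i, star (v i) * v i) + star (v 0) * (star a * a - 1) * v 0‖
      ≤ 1 + ‖star a * a - 1‖ := by
    refine (norm_add_le _ _).trans (add_le_add hv ?_)
    exact conj_norm_le ((apply_le_nv v 0).trans (mem_S_nv_le_one hv))
  exact Real.sqrt_le_sqrt hb

private lemma m2_diag_right_le (a : A) :
    m2CStarNorm (!![1, 0; 0, a] : Matrix (Fin 2) (Fin 2) A)
      ≤ Real.sqrt (1 + ‖star a * a - 1‖) := by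
  refine m2_le (Real.sqrt_nonneg _) fun v hv => ?_
  have h0 : (Matrix.mulVec !![(1:A), 0; 0, a] v) 0 = v 0 := by
    simp [Matrix.mulVec, dotProduct, Fin.sum_univ_two]
  have h1 : (Matrix.mulVec !![(1:A), 0; 0, a] v) 1 = a * v 1 := by
    simp [Matrix.mulVec, dotProduct, Fin.sum_univ_two]
  have key : ∑ i, star (Matrix.mulVec !![(1:A), 0; 0, a] v i) *
      Matrix.mulVec !![(1:A), 0; 0, a] v i
      = (∑ i, star (v i) * v i) + star (v 1) * (star a * a - 1) * v 1 := by
    rw [Fin.sum_univ_two, Fin.sum_univ_two, h0, h1]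
    simp only [star_mul, mul_sub, sub_mul, mul_one, one_mul]
    noncomm_ring
  rw [nv_eq, key]
  have hb : ‖(∑ i, star (v i) * v i) + star (v 1) * (star a * a - 1) * v 1‖
      ≤ 1 + ‖star a * a - 1‖ := by
    refine (norm_add_le _ _).trans (add_le_add hv ?_)
    exact conj_norm_le ((apply_le_nv v 1).trans (mem_S_nv_le_one hv))
  exact Real.sqrt_le_sqrt hb

private lemma m2_corner_left_le (z : A) :
    m2CStarNorm (!![z, 0; 0, 0] : Matrix (Fin 2) (Fin 2) A) ≤ ‖z‖ := by
  refine m2_le (norm_nonneg z) fun v hv => ?_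
  have h0 : (Matrix.mulVec !![z, 0; 0, (0:A)] v) 0 = z * v 0 := by
    simp [Matrix.mulVec, dotProduct, Fin.sum_univ_two]
  have h1 : (Matrix.mulVec !![z, 0; 0, (0:A)] v) 1 = 0 := by
    simp [Matrix.mulVec, dotProduct, Fin.sum_univ_two]
  rw [nv_eq, Fin.sum_univ_two, h0, h1]
  have hv0 : ‖v 0‖ ≤ 1 := (apply_le_nv v 0).trans (mem_S_nv_le_one hv)
  have : ‖star (z * v 0) * (z * v 0) + star (0:A) * 0‖ ≤ ‖z‖ ^ 2 := by
    rw [star_zero, mul_zero, add_zero, CStarRing.norm_star_mul_self]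
    calc ‖z * v 0‖ * ‖z * v 0‖ ≤ (‖z‖ * ‖v 0‖) * (‖z‖ * ‖v 0‖) := by
          exact mul_le_mul (norm_mul_le _ _) (norm_mul_le _ _) (norm_nonneg _) (by positivity)
      _ ≤ (‖z‖ * 1) * (‖z‖ * 1) := by
          exact mul_le_mul (by exact mul_le_mul_of_nonneg_left hv0 (norm_nonneg z))
            (mul_le_mul_of_nonneg_left hv0 (norm_nonneg z)) (by positivity) (by positivity)
      _ = ‖z‖ ^ 2 := by ring
  refine (Real.sqrt_le_sqrt this).trans ?_
  rw [Real.sqrt_sq (norm_nonneg z)]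

private lemma m2_corner_right_le (z : A) :
    m2CStarNorm (!![0, 0; 0, z] : Matrix (Fin 2) (Fin 2) A) ≤ ‖z‖ := by
  refine m2_le (norm_nonneg z) fun v hv => ?_
  have h0 : (Matrix.mulVec !![(0:A), 0; 0, z] v) 0 = 0 := by
    simp [Matrix.mulVec, dotProduct, Fin.sum_univ_two]
  have h1 : (Matrix.mulVec !![(0:A), 0; 0, z] v) 1 = z * v 1 := by
    simp [Matrix.mulVec, dotProduct, Fin.sum_univ_two]
  rw [nv_eq, Fin.sum_univ_two, h0, h1]
  have hv1 : ‖v 1‖ ≤ 1 := (apply_le_nv v 1).trans (mem_S_nv_le_one hv)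
  have : ‖star (0:A) * 0 + star (z * v 1) * (z * v 1)‖ ≤ ‖z‖ ^ 2 := by
    rw [star_zero, mul_zero, zero_add, CStarRing.norm_star_mul_self]
    calc ‖z * v 1‖ * ‖z * v 1‖ ≤ (‖z‖ * ‖v 1‖) * (‖z‖ * ‖v 1‖) := by
          exact mul_le_mul (norm_mul_le _ _) (norm_mul_le _ _) (norm_nonneg _) (by positivity)
      _ ≤ (‖z‖ * 1) * (‖z‖ * 1) := by
          exact mul_le_mul (by exact mul_le_mul_of_nonneg_left hv1 (norm_nonneg z))
            (mul_le_mul_of_nonneg_left hv1 (norm_nonneg z)) (by positivity) (by positivity)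
      _ = ‖z‖ ^ 2 := by ring
  refine (Real.sqrt_le_sqrt this).trans ?_
  rw [Real.sqrt_sq (norm_nonneg z)]

end aux


private lemma conj_identity {B : Type*} [Ring B] (R R' E E' D D' X Y : B)
    (hR'R : R' * R = 1) (hRR' : R * R' = 1) (hD'D : D' * D = 1 + X) (hE'E : E' * E = 1 + Y) :
    (E' * (R * (D' * R'))) * (R * (D * (R' * E))) = 1 + (Y + E' * (R * (X * (R' * E)))) := by
  have h1 : R' * (R * (D * (R' * E))) = D * (R' * E) := by rw [← mul_assoc, hR'R, one_mul]
  calc (E' * (R * (D' * R'))) * (R * (D * (R' * E)))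
      = E' * (R * (D' * (R' * (R * (D * (R' * E)))))) := by simp only [mul_assoc]
    _ = E' * (R * (D' * (D * (R' * E)))) := by rw [h1]
    _ = E' * (R * ((1 + X) * (R' * E))) := by rw [← mul_assoc D' D, hD'D]
    _ = E' * (R * (R' * E)) + E' * (R * (X * (R' * E))) := by
        simp only [add_mul, one_mul, mul_add]
    _ = E' * E + E' * (R * (X * (R' * E))) := by rw [← mul_assoc R R', hRR', one_mul]
    _ = 1 + (Y + E' * (R * (X * (R' * E)))) := by rw [hE'E, add_assoc]

private lemma conj_identity' {B : Type*} [Ring B] (R R' E E' D D' X Y : B)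
    (hR'R : R' * R = 1) (hRR' : R * R' = 1) (hEE' : E * E' = 1 + X) (hDD' : D * D' = 1 + Y) :
    (R * (D * (R' * E))) * (E' * (R * (D' * R')))
      = 1 + (R * (Y * R') + R * (D * (R' * (X * (R * (D' * R')))))) := by
  calc (R * (D * (R' * E))) * (E' * (R * (D' * R')))
      = R * (D * (R' * (E * (E' * (R * (D' * R')))))) := by simp only [mul_assoc]
    _ = R * (D * (R' * ((1 + X) * (R * (D' * R'))))) := by rw [← mul_assoc E E', hEE']
    _ = R * (D * (R' * (R * (D' * R')))) + R * (D * (R' * (X * (R * (D' * R'))))) := by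
        simp only [add_mul, one_mul, mul_add]
    _ = R * (D * (D' * R')) + R * (D * (R' * (X * (R * (D' * R'))))) := by
        rw [← mul_assoc R' R, hR'R, one_mul]
    _ = R * ((1 + Y) * R') + R * (D * (R' * (X * (R * (D' * R'))))) := by
        rw [← mul_assoc D D', hDD']
    _ = 1 + (R * (Y * R') + R * (D * (R' * (X * (R * (D' * R')))))) := by
        simp only [add_mul, one_mul, mul_add, ← mul_assoc, hRR']
        rw [add_assoc]

section
variable {A : Type*} [CStarAlgebra A]

private noncomputable def Rm (c s : ℝ) : Matrix (Fin 2) (Fin 2) A := !![c • 1, -(s • 1); s • 1, c • 1]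
private def Dm (a : A) : Matrix (Fin 2) (Fin 2) A := !![a, 0; 0, 1]
private def Em (a : A) : Matrix (Fin 2) (Fin 2) A := !![1, 0; 0, a]

private noncomputable def pathP (u : A) (t : ℝ) : Matrix (Fin 2) (Fin 2) A :=
  Rm (Real.cos (Real.pi * min (2*t) 1 / 2)) (Real.sin (Real.pi * min (2*t) 1 / 2)) *
    (Dm u * (Rm (Real.cos (Real.pi * min (2*t) 1 / 2)) (-(Real.sin (Real.pi * min (2*t) 1 / 2))) *
      Em (star u)))

private noncomputable def pathW (u : A) (t : ℝ) : Matrix (Fin 2) (Fin 2) A :=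
  (1 - max (2*t - 1) 0) • pathP u t + max (2*t - 1) 0 • 1

private lemma Rm_one : (Rm 1 0 : Matrix (Fin 2) (Fin 2) A) = 1 := by
  ext i j
  fin_cases i <;> fin_cases j <;> simp [Rm, Matrix.one_apply]

private lemma Dm_mul_Em (a b : A) : Dm a * Em b = !![a, 0; 0, b] := by
  ext i j
  fin_cases i <;> fin_cases j <;> simp [Dm, Em, Matrix.mul_apply, Fin.sum_univ_two]

private lemma pathW_zero (u : A) : pathW u 0 = !![u, 0; 0, star u] := by
  have h1 : min (2*(0:ℝ)) 1 = 0 := by norm_num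
  have h2 : max (2*(0:ℝ) - 1) 0 = 0 := by norm_num
  rw [pathW, pathP, h1, h2]
  norm_num [Rm_one, Dm_mul_Em]

private lemma pathW_one (u : A) : pathW u 1 = 1 := by
  have h2 : max (2*(1:ℝ) - 1) 0 = 1 := by norm_num
  rw [pathW, h2]
  norm_num

private lemma pathW_continuous (u : A) (i j : Fin 2) :
    Continuous fun t => pathW u t i j := by
  have hmin : Continuous fun t : ℝ => Real.pi * min (2*t) 1 / 2 := by
    have : Continuous fun t : ℝ => min (2*t) 1 :=
      (continuous_const.mul continuous_id).min continuous_const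
    fun_prop
  have hc : Continuous fun t : ℝ => Real.cos (Real.pi * min (2*t) 1 / 2) :=
    Real.continuous_cos.comp hmin
  have hs : Continuous fun t : ℝ => Real.sin (Real.pi * min (2*t) 1 / 2) :=
    Real.continuous_sin.comp hmin
  have hb : Continuous fun t : ℝ => max (2*t - 1) 0 :=
    ((continuous_const.mul continuous_id).sub continuous_const).max continuous_const
  simp only [pathW, pathP, Rm, Dm, Em, Matrix.add_apply, Matrix.smul_apply, Matrix.mul_apply,
    Fin.sum_univ_two]
  fin_cases i <;> fin_cases j <;>
    · simp
      fun_prop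
end

section case_lemmas
variable {A : Type*} [CStarAlgebra A]

private lemma pathW_eq_pathP (u : A) {t : ℝ} (ht : t ≤ 1/2) : pathW u t = pathP u t := by
  have h2 : max (2*t - 1) 0 = 0 := max_eq_right (by linarith)
  rw [pathW, h2]
  simp

private lemma star_pathP (u : A) (t : ℝ) :
    star (pathP u t)
      = Em u * (Rm (Real.cos (Real.pi * min (2*t) 1 / 2))
          (Real.sin (Real.pi * min (2*t) 1 / 2)) *
        (Dm (star u) * Rm (Real.cos (Real.pi * min (2*t) 1 / 2))
          (-(Real.sin (Real.pi * min (2*t) 1 / 2))))) := by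
  have star_Rm : ∀ c s : ℝ, star (Rm c s : Matrix (Fin 2) (Fin 2) A) = Rm c (-s) := by
    intro c s
    ext i j
    fin_cases i <;> fin_cases j <;> simp [Rm, Matrix.star_apply]
  have star_Dm : star (Dm u) = Dm (star u) := by
    ext i j
    fin_cases i <;> fin_cases j <;> simp [Dm, Matrix.star_apply]
  have star_Em : star (Em (star u)) = Em u := by
    ext i j
    fin_cases i <;> fin_cases j <;> simp [Em, Matrix.star_apply]
  rw [pathP]
  simp only [star_mul, mul_assoc, star_Rm, star_Dm, star_Em, neg_neg]

private lemma pathW_eq_diag (u : A) {t : ℝ} (ht : 1/2 ≤ t) :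
    pathW u t = !![1, 0; 0, 1 + (2 - 2*t) • (u * star u - 1)] := by
  have h1 : min (2*t) 1 = 1 := min_eq_right (by linarith)
  have h2 : max (2*t - 1) 0 = 2*t - 1 := max_eq_left (by linarith)
  have hc : Real.cos (Real.pi * min (2*t) 1 / 2) = 0 := by
    rw [h1, mul_one, Real.cos_pi_div_two]
  have hs : Real.sin (Real.pi * min (2*t) 1 / 2) = 1 := by
    rw [h1, mul_one, Real.sin_pi_div_two]
  rw [pathW, pathP, hc, hs, h2]
  ext i j
  fin_cases i <;> fin_cases j <;>
    · simp [Rm, Dm, Em, Matrix.mul_apply, Fin.sum_univ_two, Matrix.one_apply]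
      try module

private lemma diag_selfadj (β : ℝ) {y : A} (hy : star y = y) :
    star (!![1, 0; 0, 1 + β • y] : Matrix (Fin 2) (Fin 2) A) = !![1, 0; 0, 1 + β • y] := by
  ext i j
  fin_cases i <;> fin_cases j <;> simp [Matrix.star_apply, hy]

private lemma diag_sq (β : ℝ) (y : A) :
    (!![1, 0; 0, 1 + β • y] : Matrix (Fin 2) (Fin 2) A) * !![1, 0; 0, 1 + β • y] - 1
      = !![0, 0; 0, (2*β) • y + (β*β) • (y*y)] := by
  ext i j
  fin_cases i <;> fin_cases j <;>
    · simp [Matrix.mul_apply, Fin.sum_univ_two, Matrix.sub_apply, Matrix.one_apply, mul_add,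
        add_mul, smul_mul_smul_comm]
      try module

end case_lemmas


section matrixlemmas
variable {A : Type*} [CStarAlgebra A]

private lemma Rm_mul_Rm (c s c' s' : ℝ) :
    (Rm c s : Matrix (Fin 2) (Fin 2) A) * Rm c' s'
      = Rm (c * c' - s * s') (s * c' + c * s') := by
  ext i j
  fin_cases i <;> fin_cases j <;>
    · simp [Rm, Matrix.mul_apply, Fin.sum_univ_two, smul_mul_smul_comm, smul_smul]
      match_scalars <;> ring

private lemma Dm_mul_Dm (a b : A) : Dm a * Dm b = !![a * b, 0; 0, 1] := by
  ext i j
  fin_cases i <;> fin_cases j <;> simp [Dm, Matrix.mul_apply, Fin.sum_univ_two]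

private lemma Em_mul_Em (a b : A) : Em a * Em b = !![1, 0; 0, a * b] := by
  ext i j
  fin_cases i <;> fin_cases j <;> simp [Em, Matrix.mul_apply, Fin.sum_univ_two]

private lemma Dm_split (a : A) : (!![a, 0; 0, 1] : Matrix (Fin 2) (Fin 2) A)
    = 1 + !![a - 1, 0; 0, 0] := by
  ext i j
  fin_cases i <;> fin_cases j <;> simp [Matrix.one_apply]

private lemma Em_split (a : A) : (!![1, 0; 0, a] : Matrix (Fin 2) (Fin 2) A)
    = 1 + !![0, 0; 0, a - 1] := by
  ext i j
  fin_cases i <;> fin_cases j <;> simp [Matrix.one_apply]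

private lemma case1_identity (u : A) (c s : ℝ) (hcs : c ^ 2 + s ^ 2 = 1) :
    (Em u * (Rm c s * (Dm (star u) * Rm c (-s)))) *
        (Rm c s * (Dm u * (Rm c (-s) * Em (star u)))) - 1
      = !![0, 0; 0, u * star u - 1] +
        Em u * (Rm c s * (!![star u * u - 1, 0; 0, 0] * (Rm c (-s) * Em (star u)))) := by
  have e1 : c * c - -s * s = 1 := by nlinarith [hcs]
  have e2 : -s * c + c * s = 0 := by ring
  have e3 : c * c - s * -s = 1 := by nlinarith [hcs]
  have e4 : s * c + c * -s = 0 := by ring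
  have hR'R : (Rm c (-s) : Matrix (Fin 2) (Fin 2) A) * Rm c s = 1 := by
    rw [Rm_mul_Rm, e1, e2, Rm_one]
  have hRR' : (Rm c s : Matrix (Fin 2) (Fin 2) A) * Rm c (-s) = 1 := by
    rw [Rm_mul_Rm, e3, e4, Rm_one]
  have hD'D : Dm (star u) * Dm u = 1 + !![star u * u - 1, 0; 0, 0] := by
    rw [Dm_mul_Dm, Dm_split]
  have hE'E : Em u * Em (star u) = 1 + !![0, 0; 0, u * star u - 1] := by
    rw [Em_mul_Em, Em_split]
  rw [conj_identity _ _ _ _ _ _ _ _ hR'R hRR' hD'D hE'E, add_sub_cancel_left]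

private lemma case1_identity' (u : A) (c s : ℝ) (hcs : c ^ 2 + s ^ 2 = 1) :
    (Rm c s * (Dm u * (Rm c (-s) * Em (star u)))) *
        (Em u * (Rm c s * (Dm (star u) * Rm c (-s)))) - 1
      = Rm c s * (!![u * star u - 1, 0; 0, 0] * Rm c (-s)) +
        Rm c s * (Dm u * (Rm c (-s) * (!![0, 0; 0, star u * u - 1] *
          (Rm c s * (Dm (star u) * Rm c (-s)))))) := by
  have e1 : c * c - -s * s = 1 := by nlinarith [hcs]
  have e2 : -s * c + c * s = 0 := by ring
  have e3 : c * c - s * -s = 1 := by nlinarith [hcs]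
  have e4 : s * c + c * -s = 0 := by ring
  have hR'R : (Rm c (-s) : Matrix (Fin 2) (Fin 2) A) * Rm c s = 1 := by
    rw [Rm_mul_Rm, e1, e2, Rm_one]
  have hRR' : (Rm c s : Matrix (Fin 2) (Fin 2) A) * Rm c (-s) = 1 := by
    rw [Rm_mul_Rm, e3, e4, Rm_one]
  have hEE' : Em (star u) * Em u = 1 + !![0, 0; 0, star u * u - 1] := by
    rw [Em_mul_Em, Em_split]
  have hDD' : Dm u * Dm (star u) = 1 + !![u * star u - 1, 0; 0, 0] := by
    rw [Dm_mul_Dm, Dm_split]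
  rw [conj_identity' _ _ _ _ _ _ _ _ hR'R hRR' hEE' hDD', add_sub_cancel_left]

private lemma m2_mul_le_of_le {M N : Matrix (Fin 2) (Fin 2) A} {a b : ℝ}
    (hM : m2CStarNorm M ≤ a) (hN : m2CStarNorm N ≤ b) : m2CStarNorm (M * N) ≤ a * b :=
  (m2_mul_le M N).trans (mul_le_mul hM hN (m2_nonneg N) ((m2_nonneg M).trans hM))

private lemma m2_Rm_le (c s : ℝ) (hcs : c ^ 2 + s ^ 2 = 1) :
    m2CStarNorm (Rm c s : Matrix (Fin 2) (Fin 2) A) ≤ 1 := m2_rot_le c s hcs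

end matrixlemmas

private lemma num_bound {e p q : ℝ} (he1 : e < 1) (hp0 : 0 ≤ p) (hp : p < e)
    (hq0 : 0 ≤ q) (hq : q < e) :
    q + Real.sqrt (1 + p) * (1 * (p * (1 * Real.sqrt (1 + q)))) < 3 * e := by
  have he0 : 0 < e := lt_of_le_of_lt hp0 hp
  have h1 : Real.sqrt (1 + p) ≤ Real.sqrt (1 + e) := Real.sqrt_le_sqrt (by linarith)
  have h2 : Real.sqrt (1 + q) ≤ Real.sqrt (1 + e) := Real.sqrt_le_sqrt (by linarith)
  have h3 : Real.sqrt (1 + e) * Real.sqrt (1 + e) = 1 + e := Real.mul_self_sqrt (by linarith)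
  have h4 : 0 ≤ Real.sqrt (1 + p) := Real.sqrt_nonneg _
  have h5 : 0 ≤ Real.sqrt (1 + q) := Real.sqrt_nonneg _
  have h6 : 0 ≤ Real.sqrt (1 + e) := Real.sqrt_nonneg _
  have hprod : Real.sqrt (1 + p) * Real.sqrt (1 + q) ≤ 1 + e := by nlinarith
  calc q + Real.sqrt (1 + p) * (1 * (p * (1 * Real.sqrt (1 + q))))
      = q + (Real.sqrt (1 + p) * Real.sqrt (1 + q)) * p := by ring
    _ ≤ q + (1 + e) * p := by nlinarith
    _ < 3 * e := by nlinarith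

private lemma num_bound' {e p q : ℝ} (he1 : e < 1) (hp0 : 0 ≤ p) (hp : p < e)
    (hq0 : 0 ≤ q) (hq : q < e) :
    1 * (q * 1) + 1 * (Real.sqrt (1 + p) * (1 * (p * (1 * (Real.sqrt (1 + q) * 1))))) < 3 * e := by
  have h := num_bound he1 hp0 hp hq0 hq
  calc 1 * (q * 1) + 1 * (Real.sqrt (1 + p) * (1 * (p * (1 * (Real.sqrt (1 + q) * 1)))))
      = q + Real.sqrt (1 + p) * (1 * (p * (1 * Real.sqrt (1 + q)))) := by ring
    _ < 3 * e := h

/-- For an ε-unitary u (ε < 1/3) in a unital C*-algebra A, the diagonal matrix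
diag(u, u*) in M₂(A) is connected to the identity by a norm-continuous path of
3ε-unitaries of M₂(A). -/
theorem stmt9 {A : Type*} [CStarAlgebra A] (ε : ℝ) (hε0 : 0 < ε) (hε1 : ε < 1/3)
    (u : A) (h1 : ‖star u * u - 1‖ < ε) (h2 : ‖u * star u - 1‖ < ε) :
    ∃ w : ℝ → Matrix (Fin 2) (Fin 2) A,
      (∀ i j, Continuous fun t => w t i j) ∧
      w 0 = !![u, 0; 0, star u] ∧
      w 1 = 1 ∧
      ∀ t ∈ Set.Icc (0 : ℝ) 1,
        m2CStarNorm (star (w t) * w t - 1) < 3 * ε ∧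
        m2CStarNorm (w t * star (w t) - 1) < 3 * ε := by
  refine ⟨pathW u, pathW_continuous u, pathW_zero u, pathW_one u, ?_⟩
  intro t ht
  obtain ⟨ht0, ht1⟩ := ht
  have hx0 : 0 ≤ ‖star u * u - 1‖ := norm_nonneg _
  have hy0 : 0 ≤ ‖u * star u - 1‖ := norm_nonneg _
  have hε1' : ε < 1 := by linarith
  have hEu : m2CStarNorm (Em u : Matrix (Fin 2) (Fin 2) A)
      ≤ Real.sqrt (1 + ‖star u * u - 1‖) := m2_diag_right_le u
  have hEu' : m2CStarNorm (Em (star u) : Matrix (Fin 2) (Fin 2) A)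
      ≤ Real.sqrt (1 + ‖u * star u - 1‖) := by
    have := m2_diag_right_le (star u)
    rwa [star_star] at this
  have hDu : m2CStarNorm (Dm u : Matrix (Fin 2) (Fin 2) A)
      ≤ Real.sqrt (1 + ‖star u * u - 1‖) := m2_diag_left_le u
  have hDu' : m2CStarNorm (Dm (star u) : Matrix (Fin 2) (Fin 2) A)
      ≤ Real.sqrt (1 + ‖u * star u - 1‖) := by
    have := m2_diag_left_le (star u)
    rwa [star_star] at this
  have hXc : m2CStarNorm (!![star u * u - 1, 0; 0, 0] : Matrix (Fin 2) (Fin 2) A)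
      ≤ ‖star u * u - 1‖ := m2_corner_left_le _
  have hYc : m2CStarNorm (!![0, 0; 0, u * star u - 1] : Matrix (Fin 2) (Fin 2) A)
      ≤ ‖u * star u - 1‖ := m2_corner_right_le _
  have hXc' : m2CStarNorm (!![0, 0; 0, star u * u - 1] : Matrix (Fin 2) (Fin 2) A)
      ≤ ‖star u * u - 1‖ := m2_corner_right_le _
  have hYc' : m2CStarNorm (!![u * star u - 1, 0; 0, 0] : Matrix (Fin 2) (Fin 2) A)
      ≤ ‖u * star u - 1‖ := m2_corner_left_le _
  rcases le_or_gt t (1/2) with hcase | hcase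
  · rw [pathW_eq_pathP u hcase]
    have hCS : (Real.cos (Real.pi * min (2*t) 1 / 2)) ^ 2
        + (Real.sin (Real.pi * min (2*t) 1 / 2)) ^ 2 = 1 := Real.cos_sq_add_sin_sq _
    have hCS' : (Real.cos (Real.pi * min (2*t) 1 / 2)) ^ 2
        + (-(Real.sin (Real.pi * min (2*t) 1 / 2))) ^ 2 = 1 := by
      rw [neg_pow]; simpa using hCS
    have hR : m2CStarNorm (Rm (Real.cos (Real.pi * min (2*t) 1 / 2))
        (Real.sin (Real.pi * min (2*t) 1 / 2)) : Matrix (Fin 2) (Fin 2) A) ≤ 1 :=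
      m2_Rm_le _ _ hCS
    have hR' : m2CStarNorm (Rm (Real.cos (Real.pi * min (2*t) 1 / 2))
        (-(Real.sin (Real.pi * min (2*t) 1 / 2))) : Matrix (Fin 2) (Fin 2) A) ≤ 1 :=
      m2_Rm_le _ _ hCS'
    constructor
    · rw [star_pathP u t]
      simp only [pathP]
      rw [case1_identity u _ _ hCS]
      refine lt_of_le_of_lt ((m2_add_le _ _).trans (add_le_add hYc
        (m2_mul_le_of_le hEu (m2_mul_le_of_le hR
          (m2_mul_le_of_le hXc (m2_mul_le_of_le hR' hEu')))))) ?_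
      exact num_bound hε1' hx0 h1 hy0 h2
    · rw [star_pathP u t]
      simp only [pathP]
      rw [case1_identity' u _ _ hCS]
      refine lt_of_le_of_lt ((m2_add_le _ _).trans (add_le_add
        (m2_mul_le_of_le hR (m2_mul_le_of_le hYc' hR'))
        (m2_mul_le_of_le hR (m2_mul_le_of_le hDu (m2_mul_le_of_le hR'
          (m2_mul_le_of_le hXc' (m2_mul_le_of_le hR
            (m2_mul_le_of_le hDu' hR')))))))) ?_
      exact num_bound' hε1' hx0 h1 hy0 h2
  · rw [pathW_eq_diag u hcase.le]
    have hysa : star (u * star u - 1) = u * star u - 1 := by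
      simp [star_sub, star_mul]
    have hself := diag_selfadj (A := A) (2 - 2*t) hysa
    have hsq := diag_sq (2 - 2*t) (u * star u - 1)
    have hβ0 : (0:ℝ) ≤ 2 - 2*t := by linarith
    have hβ1 : (2:ℝ) - 2*t ≤ 1 := by linarith
    have hbound : m2CStarNorm (!![0, 0; 0, (2*(2 - 2*t)) • (u * star u - 1)
        + ((2 - 2*t)*(2 - 2*t)) • ((u * star u - 1) * (u * star u - 1))]
          : Matrix (Fin 2) (Fin 2) A) < 3 * ε := by
      refine lt_of_le_of_lt (m2_corner_right_le _) ?_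
      refine lt_of_le_of_lt (norm_add_le _ _) ?_
      rw [norm_smul, norm_smul]
      have hyy : ‖(u * star u - 1) * (u * star u - 1)‖
          ≤ ‖u * star u - 1‖ * ‖u * star u - 1‖ := norm_mul_le _ _
      have e1 : ‖(2*(2 - 2*t) : ℝ)‖ = 2*(2 - 2*t) := Real.norm_of_nonneg (by linarith)
      have e2 : ‖((2 - 2*t)*(2 - 2*t) : ℝ)‖ = (2 - 2*t)*(2 - 2*t) :=
        Real.norm_of_nonneg (by positivity)
      rw [e1, e2]
      have hn0 : 0 ≤ ‖(u * star u - 1) * (u * star u - 1)‖ := norm_nonneg _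
      have hb2 : (2 - 2*t) * (2 - 2*t) ≤ 1 := by nlinarith
      have k1 : 2 * (2 - 2*t) * ‖u * star u - 1‖ ≤ 2 * ‖u * star u - 1‖ := by
        have := mul_le_mul_of_nonneg_right hβ1 hy0
        linarith
      have k2 : (2 - 2*t) * (2 - 2*t) * ‖(u * star u - 1) * (u * star u - 1)‖
          ≤ ‖u * star u - 1‖ * ‖u * star u - 1‖ := by
        have h' := mul_le_mul_of_nonneg_right hb2 hn0
        rw [one_mul] at h'
        exact h'.trans hyy
      have k3 : ‖u * star u - 1‖ * ‖u * star u - 1‖ ≤ ε * ε :=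
        mul_le_mul h2.le h2.le hy0 hε0.le
      have k4 : ε * ε < ε := by nlinarith
      linarith
    constructor
    · rw [hself, hsq]
      exact hbound
    · rw [hself, hsq]
      exact hbound
end

section
/- Let A be a unital C*-algebra, let 0 < ε < 1/4, and let u ∈ A with ‖u*u − 1‖ < ε and ‖uu* − 1‖ < ε. Then u*u is invertible and positive, the element κ₁(u) := u·(u*u)^{−1/2} is a unitary in A, and ‖u − κ₁(u)‖ < ε. -/
/-- For an ε-unitary u (ε < 1/4) in a unital C*-algebra, u*u is invertible and
positive, the polar part κ₁(u) = u·(u*u)^{−1/2} is a unitary, and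
‖u − κ₁(u)‖ < ε. -/
theorem stmt10 {A : Type*} [CStarAlgebra A] [PartialOrder A] [StarOrderedRing A]
    (ε : ℝ) (hε0 : 0 < ε) (hε1 : ε < 1/4)
    (u : A) (h1 : ‖star u * u - 1‖ < ε) (h2 : ‖u * star u - 1‖ < ε) :
    IsUnit (star u * u) ∧ 0 ≤ star u * u ∧
    u * cfc (fun x : ℝ => x ^ (-(1/2) : ℝ)) (star u * u) ∈ unitary A ∧
    ‖u - u * cfc (fun x : ℝ => x ^ (-(1/2) : ℝ)) (star u * u)‖ < ε := by
  obtain hA | hA := subsingleton_or_nontrivial A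
  · refine ⟨⟨1, Subsingleton.elim _ _⟩, le_of_eq (Subsingleton.elim _ _), ?_, ?_⟩
    · have h : u * cfc (fun x : ℝ => x ^ (-(1/2) : ℝ)) (star u * u) = 1 :=
        Subsingleton.elim _ _
      rw [h]; exact one_mem _
    · have h : u - u * cfc (fun x : ℝ => x ^ (-(1/2) : ℝ)) (star u * u) = (0 : A) :=
        Subsingleton.elim _ _
      rw [h, norm_zero]; exact hε0
  set f : ℝ → ℝ := fun x => x ^ (-(1/2) : ℝ) with hf_def
  set a := star u * u with ha_def
  have ha_sa : IsSelfAdjoint a := IsSelfAdjoint.star_mul_self u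
  have hUa : IsUnit a := by
    have h : ‖1 - a‖ < 1 := by rw [norm_sub_rev]; linarith
    exact sub_sub_self 1 a ▸ (Units.oneSub (1 - a) h).isUnit
  have hUa' : IsUnit (u * star u) := by
    have h : ‖1 - u * star u‖ < 1 := by rw [norm_sub_rev]; linarith
    exact sub_sub_self 1 (u * star u) ▸ (Units.oneSub (1 - u * star u) h).isUnit
  -- spectrum bound
  have hx1 : ∀ x ∈ spectrum ℝ a, |x - 1| ≤ ‖a - 1‖ := by
    intro x hx
    have hmem : x - 1 ∈ spectrum ℝ (a - algebraMap ℝ A 1) := by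
      rw [← spectrum.sub_singleton_eq]
      exact Set.sub_mem_sub hx rfl
    have := spectrum.norm_le_norm_of_mem hmem
    rwa [map_one, Real.norm_eq_abs] at this
  have hpos : ∀ x ∈ spectrum ℝ a, (0 : ℝ) < x := by
    intro x hx
    have := hx1 x hx
    have h' := abs_le.mp this
    linarith
  have hf_cont : ContinuousOn f (spectrum ℝ a) := fun x hx =>
    (Real.continuousAt_rpow_const x _ (Or.inl (hpos x hx).ne')).continuousWithinAt
  set b := cfc f a with hb_def
  have hb_sa : IsSelfAdjoint b := cfc_predicate f a
  have hc_fid : ContinuousOn (fun x : ℝ => f x * x) (spectrum ℝ a) :=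
    hf_cont.mul continuousOn_id
  have hc_ff : ContinuousOn (fun x : ℝ => f x * f x) (spectrum ℝ a) :=
    hf_cont.mul hf_cont
  -- b * a = cfc (f·id)
  have e1 : cfc (fun x : ℝ => f x * x) a = b * a := by
    rw [cfc_mul f (fun x => x) a hf_cont continuousOn_id, cfc_id' ℝ a]
  -- b * a * b = 1
  have e2 : b * a * b = 1 := by
    have : cfc (fun x : ℝ => (f x * x) * f x) a = (b * a) * b := by
      rw [cfc_mul _ f a hc_fid hf_cont, e1]
    rw [← this, ← cfc_one (R := ℝ) a]
    apply cfc_congr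
    intro x hx
    have hx0 := hpos x hx
    have : f x * x * f x = x ^ ((-(1/2) : ℝ) + 1 + (-(1/2) : ℝ)) := by
      rw [Real.rpow_add hx0, Real.rpow_add hx0, Real.rpow_one]
    show f x * x * f x = 1
    rw [this]
    norm_num
  -- a * (b * b) = 1
  have e3 : a * (b * b) = 1 := by
    have hbb : cfc (fun x : ℝ => f x * f x) a = b * b := cfc_mul f f a hf_cont hf_cont
    have : cfc (fun x : ℝ => x * (f x * f x)) a = a * (b * b) := by
      rw [cfc_mul (fun x => x) _ a continuousOn_id hc_ff, cfc_id' ℝ a, hbb]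
    rw [← this, ← cfc_one (R := ℝ) a]
    apply cfc_congr
    intro x hx
    have hx0 := hpos x hx
    have : x * (f x * f x) = x ^ ((1 : ℝ) + (-(1/2) : ℝ) + (-(1/2) : ℝ)) := by
      rw [Real.rpow_add hx0, Real.rpow_add hx0, Real.rpow_one]
      ring
    show x * (f x * f x) = 1
    rw [this]
    norm_num
  -- u is a unit
  have hUu : IsUnit u := by
    obtain ⟨α, hα⟩ := hUa
    obtain ⟨β, hβ⟩ := hUa'
    have hlu : (↑α⁻¹ * star u) * u = 1 := by
      rw [mul_assoc, ← ha_def, ← hα, α.inv_mul]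
    have hur : u * (star u * ↑β⁻¹) = 1 := by
      rw [← mul_assoc, ← hβ, β.mul_inv]
    refine isUnit_iff_exists.mpr ⟨star u * ↑β⁻¹, hur, ?_⟩
    have : (↑α⁻¹ * star u : A) = star u * ↑β⁻¹ := by
      calc (↑α⁻¹ * star u : A) = (↑α⁻¹ * star u) * (u * (star u * ↑β⁻¹)) := by
            rw [hur, mul_one]
        _ = ((↑α⁻¹ * star u) * u) * (star u * ↑β⁻¹) := by simp only [mul_assoc]
        _ = star u * ↑β⁻¹ := by rw [hlu, one_mul]
    rw [← this]; exact hlu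
  -- v := u * b is unitary
  have hvsv : star (u * b) * (u * b) = 1 := by
    rw [star_mul, hb_sa.star_eq]
    calc b * star u * (u * b) = b * a * b := by rw [ha_def]; simp only [mul_assoc]
      _ = 1 := e2
  have hvvs : (u * b) * star (u * b) = 1 := by
    rw [star_mul, hb_sa.star_eq]
    apply hUu.star.mul_left_cancel
    calc star u * (u * b * (b * star u)) = (a * (b * b)) * star u := by rw [ha_def]; simp only [mul_assoc]
      _ = star u * 1 := by rw [e3, one_mul, mul_one]
  have hv_mem : u * b ∈ unitary A := Unitary.mem_iff.mpr ⟨hvsv, hvvs⟩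
  refine ⟨hUa, star_mul_self_nonneg u, hv_mem, ?_⟩
  -- the norm estimate
  have hkey : star (u * b) * u = cfc (fun x : ℝ => f x * x) a := by
    rw [star_mul, hb_sa.star_eq, e1, mul_assoc, ← ha_def]
  have hdiff : u - u * b = (u * b) * (cfc (fun x : ℝ => f x * x) a - 1) := by
    rw [mul_sub, ← hkey, ← mul_assoc, hvvs, one_mul, mul_one]
  rw [hdiff, CStarRing.norm_mem_unitary_mul _ hv_mem]
  have hsub : cfc (fun x : ℝ => f x * x) a - 1 = cfc (fun x : ℝ => f x * x - 1) a := by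
    rw [cfc_sub _ _ a hc_fid continuousOn_const, cfc_const_one ℝ a]
  rw [hsub]
  have hnorm : ‖cfc (fun x : ℝ => f x * x - 1) a‖ ≤ ‖a - 1‖ :=
    norm_cfc_le (norm_nonneg _) (by
      intro x hx
      have hx0 := hpos x hx
      have hfx : f x * x = x ^ ((1 : ℝ)/2) := by
        rw [show f x * x = x ^ ((-(1/2) : ℝ) + 1) from by
          rw [Real.rpow_add hx0, Real.rpow_one]]
        norm_num
      rw [Real.norm_eq_abs, hfx]
      set s := x ^ ((1 : ℝ)/2) with hs_def
      have hs0 : 0 ≤ s := Real.rpow_nonneg hx0.le _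
      have hss : s * s = x := by
        rw [hs_def, ← Real.rpow_add hx0]; norm_num
      have habs : |s - 1| * (s + 1) = |x - 1| := by
        rw [← abs_of_nonneg (by linarith : (0:ℝ) ≤ s + 1), ← abs_mul]
        congr 1
        nlinarith
      have h1' : |s - 1| ≤ |x - 1| := by
        nlinarith [abs_nonneg (s - 1)]
      exact h1'.trans (hx1 x hx))
  calc ‖cfc (fun x : ℝ => f x * x - 1) a‖ ≤ ‖a - 1‖ := hnorm
    _ < ε := h1
end
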